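/- Let r be a positive integer satisfying r < (1/2)·(log((1+√5)/2))⁻¹·log(n−1). Then every element of the kernel of SL(2,ℤ) → SL(2,ℤ/nℤ) of word length at most 2r with respect to the generating set {[[1,1],[0,1]], [[1,0],[1,1]]} is the identity. -/

import Mathlib

lemma key_ineq (u v : ℝ) : (u + v)^2 + v^2 ≤ ((1 + Real.sqrt 5) / 2) ^ 2 * (u ^ 2 + v ^ 2) := by
  have h5 : Real.sqrt 5 ^ 2 = 5 := Real.sq_sqrt (by norm_num)
  have h53 : Real.sqrt 5 ^ 3 = 5 * Real.sqrt 5 := by rw [pow_succ, h5]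
  have h5n : (0:ℝ) ≤ Real.sqrt 5 := Real.sqrt_nonneg 5
  have h2 : (2:ℝ) ≤ Real.sqrt 5 := by nlinarith
  nlinarith [mul_nonneg (show (0:ℝ) ≤ Real.sqrt 5 - 1 by linarith)
    (sq_nonneg ((1 + Real.sqrt 5) * u - 2 * v)), h5, h53]

lemma gen_sq_bound (M : Matrix (Fin 2) (Fin 2) ℤ)
    (hM : M ∈ ({!![1, 1; 0, 1], !![1, 0; 1, 1], !![1, -1; 0, 1],
        !![1, 0; -1, 1]} : Set (Matrix (Fin 2) (Fin 2) ℤ))) (u v : ℝ) :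
    ((M 0 0 : ℝ) * u + (M 0 1 : ℝ) * v) ^ 2 + ((M 1 0 : ℝ) * u + (M 1 1 : ℝ) * v) ^ 2
      ≤ ((1 + Real.sqrt 5) / 2) ^ 2 * (u ^ 2 + v ^ 2) := by
  simp only [Set.mem_insert_iff, Set.mem_singleton_iff] at hM
  rcases hM with h | h | h | h <;> subst h <;>
    simp only [Matrix.cons_val', Matrix.cons_val_zero, Matrix.cons_val_one, Matrix.head_cons,
      Matrix.empty_val', Matrix.cons_val_fin_one, Matrix.head_fin_const, Matrix.of_apply,
      Int.cast_one, Int.cast_zero, Int.cast_neg]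
  · have := key_ineq u v; linarith
  · have := key_ineq v u; linarith
  · have := key_ineq u (-v); nlinarith [this]
  · have := key_ineq v (-u); nlinarith [this]

lemma prod_sq_bound (L : List (Matrix (Fin 2) (Fin 2) ℤ))
    (hL : ∀ M ∈ L, M ∈ ({!![1, 1; 0, 1], !![1, 0; 1, 1], !![1, -1; 0, 1],
        !![1, 0; -1, 1]} : Set (Matrix (Fin 2) (Fin 2) ℤ))) (u v : ℝ) :
    ((L.prod 0 0 : ℝ) * u + (L.prod 0 1 : ℝ) * v) ^ 2
      + ((L.prod 1 0 : ℝ) * u + (L.prod 1 1 : ℝ) * v) ^ 2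
      ≤ ((1 + Real.sqrt 5) / 2) ^ (2 * L.length) * (u ^ 2 + v ^ 2) := by
  induction L generalizing u v with
  | nil => simp [Matrix.one_apply]
  | cons M L ih =>
    have hM := hL M List.mem_cons_self
    have hL' : ∀ N ∈ L, N ∈ ({!![1, 1; 0, 1], !![1, 0; 1, 1], !![1, -1; 0, 1],
        !![1, 0; -1, 1]} : Set (Matrix (Fin 2) (Fin 2) ℤ)) :=
      fun N hN => hL N (List.mem_cons_of_mem M hN)
    set A := L.prod with hA
    have hprod : (M :: L).prod = M * A := List.prod_cons
    have e : ∀ i j : Fin 2, ((M * A) i j : ℝ) = (M i 0 : ℝ) * (A 0 j : ℝ) + (M i 1 : ℝ) * (A 1 j : ℝ) := by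
      intro i j
      rw [Matrix.mul_apply, Fin.sum_univ_two]
      push_cast
      ring
    rw [hprod]
    have h1 : ((M * A) 0 0 : ℝ) * u + ((M * A) 0 1 : ℝ) * v
        = (M 0 0 : ℝ) * ((A 0 0 : ℝ) * u + (A 0 1 : ℝ) * v)
          + (M 0 1 : ℝ) * ((A 1 0 : ℝ) * u + (A 1 1 : ℝ) * v) := by
      rw [e 0 0, e 0 1]; ring
    have h2 : ((M * A) 1 0 : ℝ) * u + ((M * A) 1 1 : ℝ) * v
        = (M 1 0 : ℝ) * ((A 0 0 : ℝ) * u + (A 0 1 : ℝ) * v)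
          + (M 1 1 : ℝ) * ((A 1 0 : ℝ) * u + (A 1 1 : ℝ) * v) := by
      rw [e 1 0, e 1 1]; ring
    rw [h1, h2]
    have hgen := gen_sq_bound M hM ((A 0 0 : ℝ) * u + (A 0 1 : ℝ) * v)
      ((A 1 0 : ℝ) * u + (A 1 1 : ℝ) * v)
    have hih := ih hL' u v
    have hφpos : (0:ℝ) < ((1 + Real.sqrt 5) / 2) ^ 2 := by positivity
    calc ((M 0 0 : ℝ) * ((A 0 0 : ℝ) * u + (A 0 1 : ℝ) * v)
          + (M 0 1 : ℝ) * ((A 1 0 : ℝ) * u + (A 1 1 : ℝ) * v)) ^ 2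
        + ((M 1 0 : ℝ) * ((A 0 0 : ℝ) * u + (A 0 1 : ℝ) * v)
          + (M 1 1 : ℝ) * ((A 1 0 : ℝ) * u + (A 1 1 : ℝ) * v)) ^ 2
        ≤ ((1 + Real.sqrt 5) / 2) ^ 2 * (((A 0 0 : ℝ) * u + (A 0 1 : ℝ) * v) ^ 2
            + ((A 1 0 : ℝ) * u + (A 1 1 : ℝ) * v) ^ 2) := hgen
      _ ≤ ((1 + Real.sqrt 5) / 2) ^ 2 * (((1 + Real.sqrt 5) / 2) ^ (2 * L.length) * (u ^ 2 + v ^ 2)) := by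
          exact mul_le_mul_of_nonneg_left hih hφpos.le
      _ = ((1 + Real.sqrt 5) / 2) ^ (2 * (M :: L).length) * (u ^ 2 + v ^ 2) := by
          rw [List.length_cons, Nat.mul_succ, pow_add]
          ring

set_option maxHeartbeats 1000000 in
/-- If r < (1/2)·(log((1+√5)/2))⁻¹·log(n-1), then every element of the kernel of the
reduction SL(2,ℤ) → SL(2,ℤ/n) of word length at most 2r with respect to the generators
[[1,1],[0,1]] and [[1,0],[1,1]] (and their inverses) is the identity. -/
theorem kernel_ball_trivial (n : ℕ) (r : ℕ) (hr : 1 ≤ r)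
    (hrn : (r : ℝ) < (1 / 2) * (Real.log ((1 + Real.sqrt 5) / 2))⁻¹ * Real.log (n - 1))
    (K : Matrix (Fin 2) (Fin 2) ℤ)
    (hK : ∃ L : List (Matrix (Fin 2) (Fin 2) ℤ), L.length ≤ 2 * r ∧
      (∀ M ∈ L, M ∈ ({!![1, 1; 0, 1], !![1, 0; 1, 1], !![1, -1; 0, 1],
        !![1, 0; -1, 1]} : Set (Matrix (Fin 2) (Fin 2) ℤ))) ∧ K = L.prod)
    (hker : K.map (Int.cast : ℤ → ZMod n) = 1) :
    K = 1 := by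
  obtain ⟨L, hlen, hmem, hKL⟩ := hK
  obtain ⟨φ, hφdef⟩ : ∃ φ : ℝ, φ = (1 + Real.sqrt 5) / 2 := ⟨_, rfl⟩
  rw [← hφdef] at hrn
  have h5 : Real.sqrt 5 ^ 2 = 5 := Real.sq_sqrt (by norm_num)
  have h5n : (0:ℝ) ≤ Real.sqrt 5 := Real.sqrt_nonneg 5
  have hs2 : (2:ℝ) ≤ Real.sqrt 5 := by nlinarith
  have hφ1 : (1:ℝ) < φ := by rw [hφdef]; linarith
  have hφ0 : (0:ℝ) < φ := by linarith
  have hlog : 0 < Real.log φ := Real.log_pos hφ1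
  -- log (n-1) > 0, hence n ≥ 3
  have hlogn : 0 < Real.log ((n:ℝ) - 1) := by
    by_contra h
    push_neg at h
    have : (1/2) * (Real.log φ)⁻¹ * Real.log ((n:ℝ) - 1) ≤ 0 := by
      apply mul_nonpos_of_nonneg_of_nonpos _ h
      positivity
    have hr1 : (1:ℝ) ≤ (r:ℝ) := by exact_mod_cast hr
    linarith
  have hn3 : 3 ≤ n := by
    by_contra h
    push_neg at h
    interval_cases n
    · rw [show ((0:ℕ):ℝ) - 1 = -(1:ℝ) by norm_num, Real.log_neg_eq_log, Real.log_one] at hlogn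
      linarith
    · rw [show ((1:ℕ):ℝ) - 1 = (0:ℝ) by norm_num, Real.log_zero] at hlogn
      linarith
    · rw [show ((2:ℕ):ℝ) - 1 = (1:ℝ) by norm_num, Real.log_one] at hlogn
      linarith
  have hn1 : (1:ℝ) < (n:ℝ) - 1 := by
    have : (3:ℝ) ≤ (n:ℝ) := by exact_mod_cast hn3
    linarith
  -- φ ^ (2r) < n - 1
  have hpow : φ ^ (2 * r) < (n:ℝ) - 1 := by
    have hmul : ((2 * r : ℕ) : ℝ) * Real.log φ < Real.log ((n:ℝ) - 1) := by
      push_cast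
      have h' := mul_lt_mul_of_pos_right hrn (by positivity : (0:ℝ) < 2 * Real.log φ)
      have he : (1/2) * (Real.log φ)⁻¹ * Real.log ((n:ℝ) - 1) * (2 * Real.log φ)
          = Real.log ((n:ℝ) - 1) := by
        field_simp
      rw [he] at h'
      linarith
    have hlogpow : Real.log (φ ^ (2 * r)) = ((2 * r : ℕ) : ℝ) * Real.log φ := Real.log_pow _ _
    have hlt := hlogpow ▸ hmul
    exact (Real.log_lt_log_iff (by positivity) (by linarith)).mp hlt
  -- entry bounds
  have h0 := prod_sq_bound L hmem 1 0
  have h1 := prod_sq_bound L hmem 0 1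
  rw [← hKL, ← hφdef] at h0 h1
  norm_num at h0 h1
  have hup : (φ ^ (2 * r)) ^ 2 < ((n:ℝ) - 1) ^ 2 := by
    have hp : (0:ℝ) ≤ φ ^ (2 * r) := by positivity
    exact pow_lt_pow_left₀ hpow hp (by norm_num)
  have hmono : φ ^ (2 * L.length) ≤ (φ ^ (2 * r)) ^ 2 := by
    rw [← pow_mul]
    exact pow_le_pow_right₀ hφ1.le (by omega)
  have hb : ∀ i j : Fin 2, ((K i j : ℝ)) ^ 2 < ((n:ℝ) - 1) ^ 2 := by
    have q00 : ((K 0 0 : ℝ)) ^ 2 < ((n:ℝ)-1)^2 := by linarith [sq_nonneg ((K 1 0 : ℝ))]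
    have q10 : ((K 1 0 : ℝ)) ^ 2 < ((n:ℝ)-1)^2 := by linarith [sq_nonneg ((K 0 0 : ℝ))]
    have q01 : ((K 0 1 : ℝ)) ^ 2 < ((n:ℝ)-1)^2 := by linarith [sq_nonneg ((K 1 1 : ℝ))]
    have q11 : ((K 1 1 : ℝ)) ^ 2 < ((n:ℝ)-1)^2 := by linarith [sq_nonneg ((K 0 1 : ℝ))]
    intro i j
    fin_cases i <;> fin_cases j
    · exact q00
    · exact q01
    · exact q10
    · exact q11
  have habs : ∀ i j : Fin 2, |K i j| ≤ (n:ℤ) - 2 := by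
    intro i j
    have h := hb i j
    have hn1' : (0:ℝ) < (n:ℝ) - 1 := by linarith
    have h1 : ((K i j : ℤ) : ℝ) < ((n:ℤ) : ℝ) - 1 := by push_cast; nlinarith [h, hn1']
    have h2 : -(((n:ℤ) : ℝ) - 1) < ((K i j : ℤ) : ℝ) := by push_cast; nlinarith [h, hn1']
    have h1' : (K i j : ℤ) < (n:ℤ) - 1 := by exact_mod_cast h1
    have h2' : -((n:ℤ) - 1) < K i j := by exact_mod_cast h2
    rw [abs_le]
    omega
  -- congruences
  have hcong : ∀ i j : Fin 2, ((K i j : ZMod n)) = if i = j then 1 else 0 := by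
    intro i j
    have := congrFun (congrFun hker i) j
    rwa [Matrix.map_apply, Matrix.one_apply] at this
  have hdvd : ∀ a : ℤ, ((a : ZMod n)) = 0 → |a| < (n:ℤ) → a = 0 := by
    intro a ha hab
    have hd : (n:ℤ) ∣ a := (ZMod.intCast_zmod_eq_zero_iff_dvd a n).mp ha
    by_contra h0
    have hd' : (n:ℤ) ∣ |a| := (dvd_abs _ _).mpr hd
    have := Int.le_of_dvd (abs_pos.mpr h0) hd'
    omega
  have hnz : (3:ℤ) ≤ (n:ℤ) := by exact_mod_cast hn3
  ext i j
  fin_cases i <;> fin_cases j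
  · have hc := hcong 0 0
    simp only [if_pos rfl] at hc
    have hz : (((K 0 0 - 1 : ℤ)) : ZMod n) = 0 := by push_cast [hc]; ring
    have hab := habs 0 0
    have := hdvd _ hz (by rw [abs_lt]; rw [abs_le] at hab; omega)
    simp [Matrix.one_apply]
    omega
  · have hc := hcong 0 1
    rw [if_neg (by decide)] at hc
    have hab := habs 0 1
    have := hdvd _ hc (by omega)
    simp [Matrix.one_apply]
    omega
  · have hc := hcong 1 0
    rw [if_neg (by decide)] at hc
    have hab := habs 1 0
    have := hdvd _ hc (by omega)
    simp [Matrix.one_apply]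
    omega
  · have hc := hcong 1 1
    simp only [if_pos rfl] at hc
    have hz : (((K 1 1 - 1 : ℤ)) : ZMod n) = 0 := by push_cast [hc]; ring
    have hab := habs 1 1
    have := hdvd _ hz (by rw [abs_lt]; rw [abs_le] at hab; omega)
    simp [Matrix.one_apply]
    omega
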